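/- For every infinite ordinal α < ω^ω, the Banach space C(α) of continuous real functions on the ordinal interval [0, α] (with the order topology) is isomorphic to c₀. -/

import Mathlib

open scoped ZeroAtInfty Ordinal

open Ordinal Set

namespace Stmt14

/-- `ω ^ n` for a natural `n`, with ordinal exponent. -/
noncomputable def w (n : ℕ) : Ordinal := omega0 ^ (n : Ordinal)

theorem w_pos (n : ℕ) : 0 < w n := Ordinal.opow_pos _ omega0_pos

theorem w_dvd_w {m n : ℕ} (h : m ≤ n) : w m ∣ w n :=
  Ordinal.opow_dvd_opow _ (by exact_mod_cast h)

theorem w_one : w 1 = omega0 := by simp [w]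

noncomputable def rk (β : Ordinal) : ℕ := sInf {n : ℕ | ¬ (w (n+1) ∣ β)}

theorem rk_set_nonempty {β : Ordinal} (h : β ≠ 0) (h' : β < omega0 ^ omega0) :
    {n : ℕ | ¬ (w (n+1) ∣ β)}.Nonempty := by
  have hlt : log omega0 β < omega0 := Ordinal.lt_opow_iff_log_lt one_lt_omega0 h |>.1 h'
  obtain ⟨n, hn⟩ := Ordinal.lt_omega0.1 hlt
  refine ⟨n, fun hdvd => ?_⟩
  have hβ : β < w (n+1) := by
    calc β < omega0 ^ (Order.succ (log omega0 β)) :=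
        Ordinal.lt_opow_succ_log_self one_lt_omega0 β
    _ ≤ w (n+1) := by
        apply Ordinal.opow_le_opow_right omega0_pos
        rw [Order.succ_eq_add_one, hn]
        exact_mod_cast le_rfl
  exact absurd (Ordinal.le_of_dvd h hdvd) (not_le.2 hβ)

theorem rk_not_dvd {β : Ordinal} (h : β ≠ 0) (h' : β < omega0 ^ omega0) :
    ¬ (w (rk β + 1) ∣ β) := Nat.sInf_mem (rk_set_nonempty h h')

theorem rk_dvd (β : Ordinal) : w (rk β) ∣ β := by
  rcases Nat.eq_zero_or_pos (rk β) with h | h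
  · rw [h]; simp [w]
  · obtain ⟨m, hm⟩ := Nat.exists_eq_succ_of_ne_zero h.ne'
    have hmem : m ∉ {n : ℕ | ¬ (w (n+1) ∣ β)} := Nat.notMem_of_lt_sInf (by
      change m < rk β; omega)
    simp only [mem_setOf_eq, not_not] at hmem
    rw [hm]; exact hmem

theorem le_rk {β : Ordinal} {m : ℕ} (h : β ≠ 0) (h' : β < omega0 ^ omega0)
    (hd : w m ∣ β) : m ≤ rk β := by
  by_contra hlt
  push_neg at hlt
  exact rk_not_dvd h h' ((w_dvd_w (by omega)).trans hd)

theorem dvd_add_w (β : Ordinal) (m : ℕ) : w m ∣ β + w m := by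
  have h0 : w m ≠ 0 := (w_pos m).ne'
  have habs : β % w m + w m = w m :=
    Ordinal.add_absorp (Ordinal.mod_lt β h0) le_rfl
  refine ⟨β / w m + 1, ?_⟩
  rw [mul_add, mul_one]
  conv_lhs => rw [← Ordinal.div_add_mod β (w m), add_assoc, habs]

/-- `β + ω^m ≤ γ` whenever `β < γ` and `ω^m ∣ γ`. -/
theorem add_w_le {β γ : Ordinal} {m : ℕ} (hlt : β < γ) (hd : w m ∣ γ) :
    β + w m ≤ γ := by
  obtain ⟨p, rfl⟩ := hd
  have h0 : w m ≠ 0 := (w_pos m).ne'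
  have hq : β / w m < p := by
    by_contra hge
    push_neg at hge
    exact absurd ((mul_le_mul_right hge (w m)).trans (Ordinal.mul_div_le β _))
      (not_le.2 hlt)
  have habs : β % w m + w m = w m := Ordinal.add_absorp (Ordinal.mod_lt β h0) le_rfl
  calc β + w m = w m * (β / w m) + (β % w m + w m) := by
        rw [← add_assoc, Ordinal.div_add_mod]
    _ = w m * (β / w m + 1) := by rw [habs, mul_add, mul_one]
    _ ≤ w m * p := mul_le_mul_right (Order.add_one_le_of_lt hq) _

end Stmt14

namespace Stmt14

/-- The "next point of higher rank" map on `[0, α]`: `nxt α β` is `α` itself if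
`β = α`, otherwise the smaller of `α` and the least multiple of `ω^(rk β + 1)`
above `β`. -/
noncomputable def nxt (α β : Ordinal) : Ordinal := min α (β + w (rk β + 1))

theorem nxt_le (α β : Ordinal) : nxt α β ≤ α := min_le_left _ _

theorem nxt_self (α : Ordinal) : nxt α α = α :=
  min_eq_left (le_self_add)

theorem lt_nxt {α β : Ordinal} (h : β < α) : β < nxt α β :=
  lt_min h (lt_add_of_pos_right β (w_pos _))

theorem le_nxt (α β : Ordinal) (h : β ≤ α) : β ≤ nxt α β := by
  rcases eq_or_lt_of_le h with rfl | h
  · rw [nxt_self]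
  · exact (lt_nxt h).le

theorem nxt_pos {α β : Ordinal} (hα : 0 < α) : 0 < nxt α β :=
  lt_min hα (lt_of_lt_of_le (w_pos _) (le_add_self))

theorem rk_nxt {α β : Ordinal} (hα' : α < omega0 ^ omega0) (hne : nxt α β ≠ α) :
    rk β + 1 ≤ rk (nxt α β) := by
  have hmin : nxt α β = β + w (rk β + 1) := by
    rcases min_cases α (β + w (rk β + 1)) with ⟨h1, _⟩ | ⟨h1, _⟩
    · exact absurd h1 hne
    · exact h1
  rw [hmin]
  refine le_rk ?_ ?_ (dvd_add_w β _)
  · exact (lt_of_lt_of_le (w_pos _) (le_add_self)).ne'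
  · rw [← hmin]; exact lt_of_le_of_lt (nxt_le α β) hα'

/-- The chain `β, nxt β, nxt² β, …` reaches `α` in at most `n+1` steps,
when `α < ω^(n+1)`. -/
theorem iterate_nxt {α : Ordinal} {n : ℕ} (hα0 : 0 < α) (hα' : α < omega0 ^ omega0)
    (hn : α < w (n+1)) {β : Ordinal} (hβ : β ≤ α) :
    (nxt α)^[n+1] β = α := by
  have key : ∀ k : ℕ, (nxt α)^[k] β = α ∨
      ((nxt α)^[k] β < α ∧ (k = 0 ∨ (0 < (nxt α)^[k] β ∧ k ≤ rk ((nxt α)^[k] β)))) := by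
    intro k
    induction k with
    | zero =>
      rcases eq_or_lt_of_le hβ with h | h
      · exact Or.inl h
      · exact Or.inr ⟨h, Or.inl rfl⟩
    | succ k ih =>
      rcases ih with h | ⟨hlt, hr⟩
      · left; rw [Function.iterate_succ_apply', h, nxt_self]
      · set y := (nxt α)^[k] β with hy
        rcases eq_or_lt_of_le (nxt_le α y) with he | hlt2
        · left; rw [Function.iterate_succ_apply', ← hy, he]
        · right
          rw [Function.iterate_succ_apply', ← hy]
          refine ⟨hlt2, Or.inr ⟨nxt_pos hα0, ?_⟩⟩
          have h1 : rk y + 1 ≤ rk (nxt α y) := rk_nxt hα' hlt2.ne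
          rcases hr with rfl | ⟨_, hk⟩
          · omega
          · omega
  rcases key (n+1) with h | ⟨hlt, hr⟩
  · exact h
  · exfalso
    rcases hr with h0 | ⟨hpos, hrk⟩
    · omega
    · -- rk of a nonzero ordinal ≤ α < ω^(n+1) is ≤ n
      have hd : w (n+1) ∣ (nxt α)^[n+1] β := (w_dvd_w (by omega)).trans (rk_dvd _)
      exact absurd (Ordinal.le_of_dvd hpos.ne' hd) (not_le.2 (hlt.trans hn))
end Stmt14

namespace Stmt14

theorem one_le_rk {γ : Ordinal} (hγ : Order.IsSuccLimit γ) (h' : γ < omega0 ^ omega0) :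
    1 ≤ rk γ := by
  have hd : omega0 ∣ γ := (Ordinal.isSuccLimit_iff_omega0_dvd.1 hγ).2
  exact le_rk hγ.pos.ne' h' (by rw [w_one]; exact hd)

theorem w_succ (r : ℕ) : w (r+1) = w r * omega0 := by
  unfold w
  push_cast
  rw [Ordinal.opow_add, Ordinal.opow_one]

/-- Left neighbourhood control: just below a limit `γ < α`, the `nxt` map does not
jump past `γ`. -/
theorem exists_nxt_le {α γ : Ordinal} (hα' : α < omega0 ^ omega0)
    (hγ : Order.IsSuccLimit γ) (hγα : γ < α) :
    ∃ x, x < γ ∧ ∀ β, x < β → β < γ → nxt α β ≤ γ := by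
  have hγω : γ < omega0 ^ omega0 := hγα.trans hα'
  set r := rk γ with hr
  have hr1 : 1 ≤ r := one_le_rk hγ hγω
  have hdvd : w r ∣ γ := rk_dvd γ
  obtain ⟨q, hq⟩ := hdvd
  have hq0 : q ≠ 0 := by
    rintro rfl
    rw [mul_zero] at hq
    exact hγ.pos.ne' hq
  have hqnl : ¬ Order.IsSuccLimit q := by
    intro hql
    obtain ⟨q', hq'⟩ := (Ordinal.isSuccLimit_iff_omega0_dvd.1 hql).2
    have : w (r+1) ∣ γ := ⟨q', by rw [hq, hq', w_succ, mul_assoc]⟩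
    exact rk_not_dvd hγ.pos.ne' hγω this
  obtain ⟨q₀, hq₀⟩ : ∃ q₀, q = q₀ + 1 := by
    rcases Ordinal.zero_or_succ_or_isSuccLimit q with h | ⟨a, ha⟩ | h
    · exact absurd h hq0
    · exact ⟨a, by rw [← ha, Order.succ_eq_add_one]⟩
    · exact absurd h hqnl
  refine ⟨w r * q₀, ?_, ?_⟩
  · rw [hq, hq₀]
    exact (mul_lt_mul_iff_right₀ (w_pos r)).2 (lt_add_one q₀)
  · intro β hxβ hβγ
    have hβ0 : β ≠ 0 := by
      rintro rfl
      exact absurd hxβ (not_lt.2 zero_le)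
    have hrkβ : rk β + 1 ≤ r := by
      by_contra hcon
      push_neg at hcon
      have hrle : r ≤ rk β := by omega
      obtain ⟨p, hp⟩ := (w_dvd_w hrle).trans (rk_dvd β)
      have h1 : q₀ < p := by
        have := hxβ
        rw [hp] at this
        exact (mul_lt_mul_iff_right₀ (w_pos r)).1 this
      have h2 : p < q₀ + 1 := by
        have := hβγ
        rw [hp, hq, hq₀] at this
        exact (mul_lt_mul_iff_right₀ (w_pos r)).1 this
      rcases Order.add_one_le_of_lt h1 with h
      exact absurd h2 (not_lt.2 h)
    have : β + w (rk β + 1) ≤ γ :=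
      add_w_le hβγ ((w_dvd_w hrkβ).trans ⟨q, hq⟩)
    exact (min_le_right _ _).trans this

theorem iter_le {α β : Ordinal} (hβ : β ≤ α) (k : ℕ) :
    (nxt α)^[k] β ≤ α ∧ β ≤ (nxt α)^[k] β := by
  induction k with
  | zero => exact ⟨hβ, le_rfl⟩
  | succ k ih =>
    rw [Function.iterate_succ_apply']
    exact ⟨nxt_le _ _, ih.2.trans (le_nxt _ _ ih.1)⟩

/-- Chains starting just below a limit `γ ≤ α` pass through `γ`. -/
theorem exists_chain_to {α γ : Ordinal} {n : ℕ} (hα0 : 0 < α)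
    (hα' : α < omega0 ^ omega0) (hn : α < w (n+1))
    (hγ : Order.IsSuccLimit γ) (hγα : γ ≤ α) :
    ∃ x, x < γ ∧ ∀ β, x < β → β ≤ γ → ∃ j ≤ n+1, (nxt α)^[j] β = γ ∧
      ∀ i < j, x < (nxt α)^[i] β ∧ (nxt α)^[i] β < γ := by
  rcases eq_or_lt_of_le hγα with rfl | hlt
  · -- γ = α
    refine ⟨0, hγ.pos, fun β hxβ hβγ => ?_⟩
    have hne : {j : ℕ | (nxt γ)^[j] β = γ}.Nonempty :=
      ⟨n+1, iterate_nxt hα0 hα' hn hβγ⟩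
    refine ⟨sInf {j : ℕ | (nxt γ)^[j] β = γ}, Nat.sInf_le (iterate_nxt hα0 hα' hn hβγ),
      Nat.sInf_mem hne, fun i hi => ?_⟩
    have h1 : (nxt γ)^[i] β ≠ γ := Nat.notMem_of_lt_sInf hi
    have h2 := iter_le hβγ i
    exact ⟨lt_of_lt_of_le hxβ h2.2, lt_of_le_of_ne h2.1 h1⟩
  · -- γ < α
    obtain ⟨x, hx, hP⟩ := exists_nxt_le hα' hγ hlt
    refine ⟨x, hx, fun β hxβ hβγ => ?_⟩
    have key : ∀ k : ℕ,
        (∃ j ≤ k, (nxt α)^[j] β = γ ∧ ∀ i < j, x < (nxt α)^[i] β ∧ (nxt α)^[i] β < γ) ∨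
        ((∀ i ≤ k, x < (nxt α)^[i] β ∧ (nxt α)^[i] β < γ) ∧
          (k = 0 ∨ k ≤ rk ((nxt α)^[k] β))) := by
      intro k
      induction k with
      | zero =>
        rcases eq_or_lt_of_le hβγ with h | h
        · exact Or.inl ⟨0, le_rfl, h, fun i hi => absurd hi (Nat.not_lt_zero i)⟩
        · refine Or.inr ⟨fun i hi => ?_, Or.inl rfl⟩
          interval_cases i
          exact ⟨hxβ, h⟩
      | succ k ih =>
        rcases ih with ⟨j, hj, h⟩ | ⟨hall, hrk⟩
        · exact Or.inl ⟨j, hj.trans (Nat.le_succ k), h⟩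
        · set y := (nxt α)^[k] β with hy
          have hyx : x < y := (hall k le_rfl).1
          have hyγ : y < γ := (hall k le_rfl).2
          have hnle : nxt α y ≤ γ := hP y hyx hyγ
          rcases eq_or_lt_of_le hnle with he | hlt2
          · refine Or.inl ⟨k+1, le_rfl, ?_, fun i hi => hall i (by omega)⟩
            rw [Function.iterate_succ_apply', ← hy, he]
          · right
            have hne : nxt α y ≠ α := (hlt2.trans hlt).ne
            have h1 : rk y + 1 ≤ rk (nxt α y) := rk_nxt hα' hne
            constructor
            · intro i hi
              rcases Nat.lt_succ_iff_lt_or_eq.1 (Nat.lt_succ_of_le hi) with h' | rfl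
              · exact hall i (by omega)
              · rw [Function.iterate_succ_apply', ← hy]
                exact ⟨hyx.trans (lt_nxt (hyγ.trans hlt)), hlt2⟩
            · right
              rw [Function.iterate_succ_apply', ← hy]
              rcases hrk with rfl | hk
              · omega
              · omega
    rcases key (n+1) with h | ⟨hall, hrk⟩
    · exact h
    · exfalso
      have hpos : 0 < (nxt α)^[n+1] β :=
        lt_of_le_of_lt (zero_le : 0 ≤ x) (hall (n+1) le_rfl).1
      have hrk' : n+1 ≤ rk ((nxt α)^[n+1] β) := by
        rcases hrk with h0 | h
        · omega
        · exact h
      have hd : w (n+1) ∣ (nxt α)^[n+1] β := (w_dvd_w hrk').trans (rk_dvd _)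
      exact absurd (Ordinal.le_of_dvd hpos.ne' hd)
        (not_le.2 (((hall (n+1) le_rfl).2.trans hlt).trans hn))

end Stmt14

namespace Stmt14
open Filter Topology

/-- The differences `f β - f (nxt α β)` are small off a finite set. -/
theorem finite_big {α : Ordinal} (hα' : α < omega0 ^ omega0)
    {f' : Ordinal → ℝ} (hf : Continuous f') {ε : ℝ} (hε : 0 < ε) :
    {β : Ordinal | β < α ∧ ε ≤ |f' β - f' (nxt α β)|}.Finite := by
  by_contra hinf
  set S := {β : Ordinal | β < α ∧ ε ≤ |f' β - f' (nxt α β)|} with hS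
  set U := {δ : Ordinal | ¬ (S ∩ Iio δ).Finite} with hU
  have hUne : α + 1 ∈ U := by
    have hsub : S ⊆ Iio (α+1) := fun β hβ => lt_of_lt_of_le hβ.1 (le_self_add)
    rw [hU, mem_setOf_eq, Set.inter_eq_self_of_subset_left hsub]
    exact hinf
  set γ := sInf U with hγdef
  have hγU : γ ∈ U := csInf_mem ⟨_, hUne⟩
  have hbelow : ∀ δ, δ < γ → (S ∩ Iio δ).Finite := by
    intro δ hδ
    by_contra hc
    exact absurd (csInf_le (OrderBot.bddBelow U) hc) (not_le.2 hδ)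
  have hγ0 : γ ≠ 0 := by
    intro h
    apply hγU
    have : S ∩ Iio γ ⊆ ∅ := by
      intro β hβ
      exact absurd hβ.2 (by rw [h]; exact not_lt.2 (zero_le : 0 ≤ β))
    exact Set.Finite.subset (Set.finite_empty) this
  have hγlim : Order.IsSuccLimit γ := by
    rcases Ordinal.zero_or_succ_or_isSuccLimit γ with h | ⟨a, ha⟩ | h
    · exact absurd h hγ0
    · exfalso
      apply hγU
      have hsub : S ∩ Iio γ ⊆ (S ∩ Iio a) ∪ {a} := by
        intro β hβ
        have hβ2 : β < Order.succ a := by rw [ha]; exact hβ.2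
        rcases lt_or_eq_of_le (Order.lt_succ_iff.1 hβ2) with h' | h'
        · exact Or.inl ⟨hβ.1, h'⟩
        · exact Or.inr (by simp [h'])
      exact Set.Finite.subset ((hbelow a (by rw [← ha]; exact Order.lt_succ a)).union
        (Set.finite_singleton a)) hsub
    · exact h
  have hγα : γ ≤ α := by
    by_contra hc
    push_neg at hc
    have h1 : γ ≤ α + 1 := csInf_le (OrderBot.bddBelow U) hUne
    have h2 : Order.succ α < γ := hγlim.succ_lt hc
    rw [Ordinal.add_one_eq_succ] at h1
    exact absurd (h2.trans_le h1) (lt_irrefl _)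
  -- pick a good point below γ
  have hc : ContinuousAt f' γ := hf.continuousAt
  have hball : f' ⁻¹' Metric.ball (f' γ) (ε/2) ∈ 𝓝 γ :=
    hc (Metric.ball_mem_nhds _ (by positivity))
  obtain ⟨x₁, hx₁γ, hsub⟩ := (SuccOrder.hasBasis_nhds_Ioc_of_exists_lt ⟨0, pos_iff_ne_zero.2 hγ0⟩).mem_iff.1 hball
  obtain ⟨x₂, hx₂γ, hP⟩ : ∃ x₂, x₂ < γ ∧ ∀ β, x₂ < β → β < γ → nxt α β ≤ γ := by
    rcases eq_or_lt_of_le hγα with heq | hlt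
    · exact ⟨0, hγlim.pos, fun β _ _ => heq ▸ nxt_le _ _⟩
    · obtain ⟨x₂, h1, h2⟩ := exists_nxt_le hα' hγlim hlt
      exact ⟨x₂, h1, h2⟩
  obtain ⟨x, hx⟩ : ∃ x, x = max x₁ x₂ := ⟨_, rfl⟩
  have hxγ : x < γ := by rw [hx]; exact max_lt hx₁γ hx₂γ
  have hEx : ∃ β, β ∈ S ∧ x < β ∧ β < γ := by
    have hfin : (S ∩ Iio (x+1)).Finite := hbelow _ (by
      rw [Ordinal.add_one_eq_succ]; exact hγlim.succ_lt hxγ)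
    have hinf2 : ((S ∩ Iio γ) \ (S ∩ Iio (x+1))).Infinite :=
      Set.Infinite.diff (fun h => hγU h) hfin
    obtain ⟨β, hβ⟩ := hinf2.nonempty
    refine ⟨β, hβ.1.1, ?_, hβ.1.2⟩
    have := hβ.2
    by_contra hle
    push_neg at hle
    exact this ⟨hβ.1.1, Set.mem_Iio.2 (by rw [Ordinal.add_one_eq_succ]; exact Order.lt_succ_iff.2 hle)⟩
  obtain ⟨β, hβS, hxβ, hβγ⟩ := hEx
  have hβα : β < α := hβS.1
  rw [hx] at hxβ
  have hnle : nxt α β ≤ γ := hP β (lt_of_le_of_lt (le_max_right x₁ x₂) hxβ) hβγ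
  have hβmem : β ∈ Set.Ioc x₁ γ :=
    ⟨lt_of_le_of_lt (le_max_left x₁ x₂) hxβ, hβγ.le⟩
  have hnmem : nxt α β ∈ Set.Ioc x₁ γ :=
    ⟨lt_trans (lt_of_le_of_lt (le_max_left x₁ x₂) hxβ) (lt_nxt hβα), hnle⟩
  have h1 := hsub hβmem
  have h2 := hsub hnmem
  simp only [Set.mem_preimage, Metric.mem_ball, Real.dist_eq] at h1 h2
  have := hβS.2
  have habs : |f' β - f' (nxt α β)| < ε := by
    calc |f' β - f' (nxt α β)| ≤ |f' β - f' γ| + |f' γ - f' (nxt α β)| := abs_sub_le _ _ _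
    _ < ε/2 + ε/2 := add_lt_add h1 (by rwa [abs_sub_comm])
    _ = ε := by ring
  linarith

theorem iter_fix (α : Ordinal) (k : ℕ) : (nxt α)^[k] α = α := by
  induction k with
  | zero => rfl
  | succ k ih => rw [Function.iterate_succ_apply', ih, nxt_self]

theorem iter_absorb {α β : Ordinal} {n : ℕ} (hα0 : 0 < α) (hα' : α < omega0 ^ omega0)
    (hn : α < w (n+1)) (hβ : β ≤ α) {k : ℕ} (hk : n+1 ≤ k) :
    (nxt α)^[k] β = α := by
  obtain ⟨m, rfl⟩ := Nat.exists_eq_add_of_le hk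
  rw [add_comm, Function.iterate_add_apply, iterate_nxt hα0 hα' hn hβ, iter_fix]

/-- Continuity of the inverse transform. -/
theorem continuousOn_sum {α : Ordinal} {n : ℕ} (hα0 : 0 < α)
    (hα' : α < omega0 ^ omega0) (hn : α < w (n+1)) {G : Ordinal → ℝ}
    (hG0 : G α = 0)
    (hGfin : ∀ ε, 0 < ε → {δ : Ordinal | ε ≤ |G δ|}.Finite) :
    ContinuousOn (fun β => ∑ k ∈ Finset.range (2*n+2), G ((nxt α)^[k] β)) (Set.Iic α) := by
  set F := fun β => ∑ k ∈ Finset.range (2*n+2), G ((nxt α)^[k] β) with hF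
  intro γ hγα
  rw [Set.mem_Iic] at hγα
  by_cases hlim : Order.IsSuccLimit γ
  · -- limit case
    apply ContinuousAt.continuousWithinAt
    rw [ContinuousAt, Metric.tendsto_nhds]
    intro ε hε
    set ε' := ε / (n+2) with hε'
    have hε'pos : 0 < ε' := by positivity
    have hF₀ : {δ : Ordinal | ε' ≤ |G δ|}.Finite := hGfin ε' hε'pos
    -- x₁ : avoid the finite set F₀ in (x₁, γ)
    obtain ⟨x₁, hx₁γ, hx₁⟩ : ∃ x₁, x₁ < γ ∧
        ∀ δ, x₁ < δ → δ < γ → ¬ ε' ≤ |G δ| := by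
      by_cases hne : ({δ : Ordinal | ε' ≤ |G δ|} ∩ Iio γ).Nonempty
      · have hfin : ({δ : Ordinal | ε' ≤ |G δ|} ∩ Iio γ).Finite := hF₀.inter_of_left _
        set x₁ := sSup ({δ : Ordinal | ε' ≤ |G δ|} ∩ Iio γ) with hx₁def
        have hmem := hne.csSup_mem hfin
        refine ⟨x₁, hmem.2, fun δ h1 h2 habs => ?_⟩
        have : δ ≤ x₁ := le_csSup hfin.bddAbove ⟨habs, h2⟩
        exact absurd h1 (not_lt.2 this)
      · refine ⟨0, hlim.pos, fun δ h1 h2 habs => hne ⟨δ, habs, h2⟩⟩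
    obtain ⟨x₀, hx₀γ, hchain⟩ := exists_chain_to hα0 hα' hn hlim hγα
    set x := max x₀ x₁ with hxdef
    have hxγ : x < γ := max_lt hx₀γ hx₁γ
    have hIoc : Set.Ioc x γ ∈ 𝓝 γ := (SuccOrder.hasBasis_nhds_Ioc_of_exists_lt ⟨0, hlim.pos⟩).mem_iff.2
      ⟨x, hxγ, le_rfl⟩
    filter_upwards [hIoc] with β hβ
    obtain ⟨hxβ, hβγ⟩ := hβ
    obtain ⟨j, hj, hiter, hprev⟩ := hchain β (lt_of_le_of_lt (le_max_left _ _) hxβ) hβγ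
    have hβα : β ≤ α := hβγ.trans hγα
    -- split the two sums
    have hj2 : j ≤ 2*n+2 := by omega
    obtain ⟨m, hm⟩ : ∃ m, 2*n+2 = j + m := ⟨2*n+2 - j, by omega⟩
    have hsum1 : F β = (∑ k ∈ Finset.range j, G ((nxt α)^[k] β))
        + ∑ i ∈ Finset.range m, G ((nxt α)^[i] γ) := by
      rw [hF]
      simp only []
      rw [hm, Finset.sum_range_add]
      congr 1
      apply Finset.sum_congr rfl
      intro i _
      rw [add_comm j i, Function.iterate_add_apply, hiter]
    have hsum2 : F γ = ∑ i ∈ Finset.range m, G ((nxt α)^[i] γ) := by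
      rw [hF]
      simp only []
      conv_lhs => rw [hm, add_comm j m, Finset.sum_range_add]
      have : ∀ i ∈ Finset.range j, G ((nxt α)^[m+i] γ) = 0 := by
        intro i _
        have hmi : n+1 ≤ m + i := by omega
        rw [iter_absorb hα0 hα' hn hγα hmi, hG0]
      rw [Finset.sum_congr rfl this]
      simp
    have hdiff : F β - F γ = ∑ k ∈ Finset.range j, G ((nxt α)^[k] β) := by
      rw [hsum1, hsum2]; ring
    rw [Real.dist_eq, hdiff]
    calc |∑ k ∈ Finset.range j, G ((nxt α)^[k] β)|
        ≤ ∑ k ∈ Finset.range j, |G ((nxt α)^[k] β)| := Finset.abs_sum_le_sum_abs _ _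
      _ ≤ ∑ _k ∈ Finset.range j, ε' := by
          apply Finset.sum_le_sum
          intro k hk
          rw [Finset.mem_range] at hk
          have h1 := hprev k hk
          have h2 : x₁ < (nxt α)^[k] β :=
            lt_of_le_of_lt (le_max_right x₀ x₁) (lt_of_lt_of_le hxβ (iter_le hβα k).2)
          exact le_of_not_ge (hx₁ _ h2 h1.2)
      _ = j * ε' := by rw [Finset.sum_const, Finset.card_range, _root_.nsmul_eq_mul]
      _ ≤ (n+1) * ε' := by
          apply mul_le_mul_of_nonneg_right _ hε'pos.le
          exact_mod_cast hj
      _ < ε := by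
          have h2 : (0:ℝ) < n + 2 := by positivity
          rw [hε', mul_div_assoc', div_lt_iff₀ h2]
          nlinarith
  · -- isolated point
    have : 𝓝 γ = pure γ := Ordinal.nhds_eq_pure.2 hlim
    exact (tendsto_pure_nhds F γ).mono_left
      (le_trans nhdsWithin_le_nhds (le_of_eq this))

end Stmt14

namespace Stmt14
open Filter Topology BoundedContinuousFunction
open scoped ZeroAtInfty

noncomputable def pii (α : Ordinal) (δ : Ordinal) : ↥(Set.Iic α) :=
  ⟨min δ α, Set.mem_Iic.2 (min_le_right _ _)⟩

theorem continuous_pii (α : Ordinal) : Continuous (pii α) :=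
  Continuous.subtype_mk (Continuous.min continuous_id continuous_const) _

theorem pii_coe {α δ : Ordinal} (h : δ ≤ α) : ((pii α δ) : Ordinal) = δ := min_eq_left h

theorem pii_val {α : Ordinal} (b : ↥(Set.Iic α)) : pii α ↑b = b :=
  Subtype.ext (pii_coe b.2)

noncomputable def fext (α : Ordinal) (f : BoundedContinuousFunction ↥(Set.Iic α) ℝ) :
    Ordinal → ℝ := fun δ => f (pii α δ)

theorem continuous_fext (α f) : Continuous (fext α f) := f.continuous.comp (continuous_pii α)

theorem abs_fext_le (α f δ) : |fext α f δ| ≤ ‖f‖ := by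
  have := f.norm_coe_le_norm (pii α δ)
  rwa [Real.norm_eq_abs] at this

theorem fext_apply {α : Ordinal} (f) (b : ↥(Set.Iic α)) : fext α f ↑b = f b := by
  rw [fext, pii_val]

/-- The forward transform, as a function `ℕ → ℝ`. -/
noncomputable def Tg (α : Ordinal) (e : ℕ ≃ ↥(Set.Iio α))
    (f : BoundedContinuousFunction ↥(Set.Iic α) ℝ) : ℕ → ℝ :=
  fun m => fext α f ((e m : ↥(Set.Iio α)) : Ordinal)
    - fext α f (nxt α ((e m : ↥(Set.Iio α)) : Ordinal))

theorem Tg_zero_at_infty {α : Ordinal} (hα' : α < omega0 ^ omega0)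
    (e : ℕ ≃ ↥(Set.Iio α)) (f : BoundedContinuousFunction ↥(Set.Iic α) ℝ) :
    Tendsto (Tg α e f) (cocompact ℕ) (𝓝 0) := by
  rw [cocompact_eq_cofinite]
  rw [Metric.tendsto_nhds]
  intro ε hε
  rw [Filter.eventually_cofinite]
  have hfin := finite_big hα' (continuous_fext α f) hε
  have hsub : {m : ℕ | ¬ dist (Tg α e f m) 0 < ε} ⊆
      (fun m : ℕ => ((e m : ↥(Set.Iio α)) : Ordinal)) ⁻¹'
        {β : Ordinal | β < α ∧ ε ≤ |fext α f β - fext α f (nxt α β)|} := by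
    intro m hm
    simp only [Set.mem_setOf_eq, not_lt, Real.dist_eq, sub_zero, Tg] at hm
    refine ⟨(e m).2, ?_⟩
    simpa using hm
  exact Set.Finite.subset (hfin.preimage
    (Set.injOn_of_injective (Subtype.val_injective.comp e.injective))) hsub

/-- The forward transform, bundled as an element of `C₀`. -/
noncomputable def TC0 {α : Ordinal} (hα' : α < omega0 ^ omega0) (e : ℕ ≃ ↥(Set.Iio α))
    (f : BoundedContinuousFunction ↥(Set.Iic α) ℝ) : C₀(ℕ, ℝ) :=
  ⟨⟨Tg α e f, continuous_of_discreteTopology⟩, Tg_zero_at_infty hα' e f⟩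

@[simp] theorem TC0_apply {α : Ordinal} (hα' : α < omega0 ^ omega0) (e : ℕ ≃ ↥(Set.Iio α))
    (f) (m : ℕ) : TC0 hα' e f m = Tg α e f m := rfl

/-- The inverse transform's coefficient function. -/
noncomputable def Ghat (α : Ordinal) (e : ℕ ≃ ↥(Set.Iio α)) (g : C₀(ℕ, ℝ)) :
    Ordinal → ℝ :=
  fun δ => if h : δ < α then g (e.symm ⟨δ, h⟩) else 0

theorem Ghat_add (α e g₁ g₂) (δ : Ordinal) :
    Ghat α e (g₁ + g₂) δ = Ghat α e g₁ δ + Ghat α e g₂ δ := by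
  unfold Ghat; split_ifs with h <;> simp

theorem Ghat_smul (α e) (c : ℝ) (g) (δ : Ordinal) :
    Ghat α e (c • g) δ = c * Ghat α e g δ := by
  unfold Ghat; split_ifs with h <;> simp

theorem Ghat_top (α e g) : Ghat α e g α = 0 := dif_neg (lt_irrefl α)

theorem abs_Ghat_le (α e g) (δ : Ordinal) : |Ghat α e g δ| ≤ ‖g‖ := by
  unfold Ghat; split_ifs with h
  · have : ‖g (e.symm ⟨δ, h⟩)‖ ≤ ‖g‖ := by
      rw [← ZeroAtInftyContinuousMap.norm_toBCF_eq_norm]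
      exact BoundedContinuousFunction.norm_coe_le_norm g.toBCF _
    rwa [Real.norm_eq_abs] at this
  · simp [norm_nonneg]

theorem Ghat_fin (α : Ordinal) (e : ℕ ≃ ↥(Set.Iio α)) (g : C₀(ℕ, ℝ)) {ε : ℝ} (hε : 0 < ε) :
    {δ : Ordinal | ε ≤ |Ghat α e g δ|}.Finite := by
  have hK : {k : ℕ | ε ≤ |g k|}.Finite := by
    have h := g.zero_at_infty'
    rw [cocompact_eq_cofinite] at h
    have h2 := Metric.tendsto_nhds.1 h ε hε
    rw [Filter.eventually_cofinite] at h2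
    refine h2.subset ?_
    intro k hk
    simp only [Set.mem_setOf_eq, not_lt, Real.dist_eq]
    rw [Set.mem_setOf_eq] at hk
    calc ε ≤ |g k| := hk
    _ = |g.toFun k - 0| := by norm_num
  refine (hK.image (fun k => ((e k : ↥(Set.Iio α)) : Ordinal))).subset ?_
  intro δ hδ
  rw [Set.mem_setOf_eq] at hδ
  by_cases h : δ < α
  · refine ⟨e.symm ⟨δ, h⟩, ?_, ?_⟩
    · rw [Set.mem_setOf_eq]
      rwa [Ghat, dif_pos h] at hδ
    · show ((e (e.symm ⟨δ, h⟩) : ↥(Set.Iio α)) : Ordinal) = δ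
      rw [Equiv.apply_symm_apply]
  · rw [Ghat, dif_neg h] at hδ
    simp only [abs_zero] at hδ
    linarith

/-- The inverse transform, as a function of ordinals. -/
noncomputable def Sfun (α : Ordinal) (n : ℕ) (e : ℕ ≃ ↥(Set.Iio α))
    (p : ℝ × C₀(ℕ, ℝ)) : Ordinal → ℝ :=
  fun β => p.1 + ∑ k ∈ Finset.range (2*n+2), Ghat α e p.2 ((nxt α)^[k] β)

theorem abs_Sfun_le (α n e p β) : |Sfun α n e p β| ≤ |p.1| + (2*n+2) * ‖p.2‖ := by
  refine (abs_add_le _ _).trans ?_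
  gcongr
  calc |∑ k ∈ Finset.range (2*n+2), Ghat α e p.2 ((nxt α)^[k] β)|
      ≤ ∑ k ∈ Finset.range (2*n+2), |Ghat α e p.2 ((nxt α)^[k] β)| :=
        Finset.abs_sum_le_sum_abs _ _
    _ ≤ ∑ _k ∈ Finset.range (2*n+2), ‖p.2‖ :=
        Finset.sum_le_sum fun k _ => abs_Ghat_le α e p.2 _
    _ = (2*n+2) * ‖p.2‖ := by rw [Finset.sum_const, Finset.card_range, _root_.nsmul_eq_mul]; push_cast; ring

theorem Sfun_continuousOn {α : Ordinal} {n : ℕ} (hα0 : 0 < α)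
    (hα' : α < omega0 ^ omega0) (hn : α < w (n+1)) (e : ℕ ≃ ↥(Set.Iio α))
    (p : ℝ × C₀(ℕ, ℝ)) : ContinuousOn (Sfun α n e p) (Set.Iic α) := by
  apply ContinuousOn.add continuousOn_const
  exact continuousOn_sum hα0 hα' hn (Ghat_top α e p.2) (fun ε hε => Ghat_fin α e p.2 hε)

/-- The inverse transform, as a bounded continuous function on `Iic α`. -/
noncomputable def SB {α : Ordinal} {n : ℕ} (hα0 : 0 < α)
    (hα' : α < omega0 ^ omega0) (hn : α < w (n+1)) (e : ℕ ≃ ↥(Set.Iio α))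
    (p : ℝ × C₀(ℕ, ℝ)) : BoundedContinuousFunction ↥(Set.Iic α) ℝ :=
  BoundedContinuousFunction.ofNormedAddCommGroup
    ((Set.Iic α).restrict (Sfun α n e p))
    (ContinuousOn.restrict (Sfun_continuousOn hα0 hα' hn e p))
    (|p.1| + (2*n+2) * ‖p.2‖)
    (fun b => by rw [Real.norm_eq_abs]; exact abs_Sfun_le α n e p b)

@[simp] theorem SB_apply {α : Ordinal} {n : ℕ} (hα0 : 0 < α)
    (hα' : α < omega0 ^ omega0) (hn : α < w (n+1)) (e : ℕ ≃ ↥(Set.Iio α))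
    (p : ℝ × C₀(ℕ, ℝ)) (b : ↥(Set.Iic α)) :
    SB hα0 hα' hn e p b = Sfun α n e p ↑b := rfl

end Stmt14

namespace Stmt14
open Filter Topology BoundedContinuousFunction
open scoped ZeroAtInfty

theorem Ghat_TC0 {α : Ordinal} (hα' : α < omega0 ^ omega0) (e : ℕ ≃ ↥(Set.Iio α))
    (f : BoundedContinuousFunction ↥(Set.Iic α) ℝ) {δ : Ordinal} (hδ : δ ≤ α) :
    Ghat α e (TC0 hα' e f) δ = fext α f δ - fext α f (nxt α δ) := by
  unfold Ghat
  split_ifs with h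
  · show Tg α e f (e.symm ⟨δ, h⟩) = _
    unfold Tg
    rw [Equiv.apply_symm_apply]
  · have hδα : δ = α := le_antisymm hδ (not_lt.1 h)
    rw [hδα, nxt_self]
    ring

theorem left_inverse_SB {α : Ordinal} {n : ℕ} (hα0 : 0 < α)
    (hα' : α < omega0 ^ omega0) (hn : α < w (n+1)) (e : ℕ ≃ ↥(Set.Iio α))
    (f : BoundedContinuousFunction ↥(Set.Iic α) ℝ) :
    SB hα0 hα' hn e (fext α f α, TC0 hα' e f) = f := by
  ext b
  rw [SB_apply]
  show fext α f α + ∑ k ∈ Finset.range (2*n+2),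
      Ghat α e (TC0 hα' e f) ((nxt α)^[k] ↑b) = f b
  have hb : (b : Ordinal) ≤ α := b.2
  have hterm : ∀ k ∈ Finset.range (2*n+2), Ghat α e (TC0 hα' e f) ((nxt α)^[k] ↑b)
      = (fun j => fext α f ((nxt α)^[j] (b : Ordinal))) k
        - (fun j => fext α f ((nxt α)^[j] (b : Ordinal))) (k+1) := by
    intro k _
    rw [Ghat_TC0 hα' e f (iter_le hb k).1]
    simp only []
    rw [Function.iterate_succ_apply']
  rw [Finset.sum_congr rfl hterm, Finset.sum_range_sub']
  simp only [Function.iterate_zero_apply]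
  rw [iter_absorb hα0 hα' hn hb (by omega), fext_apply]
  ring

theorem fext_SB {α : Ordinal} {n : ℕ} (hα0 : 0 < α)
    (hα' : α < omega0 ^ omega0) (hn : α < w (n+1)) (e : ℕ ≃ ↥(Set.Iio α))
    (p : ℝ × C₀(ℕ, ℝ)) {δ : Ordinal} (hδ : δ ≤ α) :
    fext α (SB hα0 hα' hn e p) δ = Sfun α n e p δ := by
  show Sfun α n e p ((pii α δ : ↥(Set.Iic α)) : Ordinal) = Sfun α n e p δ
  rw [pii_coe hδ]

theorem right_inverse_SB {α : Ordinal} {n : ℕ} (hα0 : 0 < α)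
    (hα' : α < omega0 ^ omega0) (hn : α < w (n+1)) (e : ℕ ≃ ↥(Set.Iio α))
    (p : ℝ × C₀(ℕ, ℝ)) :
    (fext α (SB hα0 hα' hn e p) α, TC0 hα' e (SB hα0 hα' hn e p)) = p := by
  refine Prod.ext ?_ ?_
  · show fext α (SB hα0 hα' hn e p) α = p.1
    rw [fext_SB hα0 hα' hn e p le_rfl]
    unfold Sfun
    have hz : ∀ k ∈ Finset.range (2*n+2), Ghat α e p.2 ((nxt α)^[k] α) = 0 := by
      intro k _
      rw [iter_fix, Ghat_top]
    rw [Finset.sum_congr rfl hz]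
    simp
  · show TC0 hα' e (SB hα0 hα' hn e p) = p.2
    ext m
    show Tg α e (SB hα0 hα' hn e p) m = p.2 m
    unfold Tg
    set δ := ((e m : ↥(Set.Iio α)) : Ordinal) with hδdef
    have hδα : δ < α := (e m).2
    rw [fext_SB hα0 hα' hn e p hδα.le, fext_SB hα0 hα' hn e p (nxt_le α δ)]
    unfold Sfun
    have hshift : ∀ k ∈ Finset.range (2*n+2), Ghat α e p.2 ((nxt α)^[k] (nxt α δ))
        = (fun j => Ghat α e p.2 ((nxt α)^[j] δ)) (k+1) := by
      intro k _
      simp only []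
      rw [Function.iterate_succ_apply]
    have key : ∑ k ∈ Finset.range (2*n+2), Ghat α e p.2 ((nxt α)^[k] δ)
        - ∑ k ∈ Finset.range (2*n+2), Ghat α e p.2 ((nxt α)^[k] (nxt α δ))
        = Ghat α e p.2 δ - Ghat α e p.2 ((nxt α)^[2*n+2] δ) := by
      rw [Finset.sum_congr rfl hshift, ← Finset.sum_sub_distrib]
      have := Finset.sum_range_sub' (fun j => Ghat α e p.2 ((nxt α)^[j] δ)) (2*n+2)
      rw [this]
      simp
    have hfin : (nxt α)^[2*n+2] δ = α := iter_absorb hα0 hα' hn hδα.le (by omega)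
    have hGδ : Ghat α e p.2 δ = p.2 m := by
      unfold Ghat
      rw [dif_pos hδα]
      have hmk : (⟨δ, hδα⟩ : ↥(Set.Iio α)) = e m := Subtype.ext rfl
      rw [hmk, Equiv.symm_apply_apply]
    calc p.1 + ∑ k ∈ Finset.range (2*n+2), Ghat α e p.2 ((nxt α)^[k] δ)
        - (p.1 + ∑ k ∈ Finset.range (2*n+2), Ghat α e p.2 ((nxt α)^[k] (nxt α δ)))
        = ∑ k ∈ Finset.range (2*n+2), Ghat α e p.2 ((nxt α)^[k] δ)
          - ∑ k ∈ Finset.range (2*n+2), Ghat α e p.2 ((nxt α)^[k] (nxt α δ)) := by ring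
      _ = Ghat α e p.2 δ - Ghat α e p.2 ((nxt α)^[2*n+2] δ) := key
      _ = p.2 m := by rw [hfin, Ghat_top, hGδ]; ring

/-- The forward transform as a linear map. -/
noncomputable def Tlin {α : Ordinal} (hα' : α < omega0 ^ omega0) (e : ℕ ≃ ↥(Set.Iio α)) :
    BoundedContinuousFunction ↥(Set.Iic α) ℝ →ₗ[ℝ] ℝ × C₀(ℕ, ℝ) where
  toFun f := (fext α f α, TC0 hα' e f)
  map_add' f g := by
    refine Prod.ext ?_ ?_
    · show fext α (f + g) α = fext α f α + fext α g α
      simp [fext]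
    · show TC0 hα' e (f + g) = TC0 hα' e f + TC0 hα' e g
      ext m
      show Tg α e (f + g) m = Tg α e f m + Tg α e g m
      simp only [Tg, fext, BoundedContinuousFunction.coe_add, Pi.add_apply]
      ring
  map_smul' c f := by
    refine Prod.ext ?_ ?_
    · show fext α (c • f) α = c • fext α f α
      simp [fext]
    · show TC0 hα' e (c • f) = c • TC0 hα' e f
      ext m
      show Tg α e (c • f) m = c • Tg α e f m
      simp only [Tg, fext, BoundedContinuousFunction.coe_smul, Pi.smul_apply]
      rw [smul_sub]

/-- The inverse transform as a linear map. -/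
noncomputable def Slin {α : Ordinal} {n : ℕ} (hα0 : 0 < α)
    (hα' : α < omega0 ^ omega0) (hn : α < w (n+1)) (e : ℕ ≃ ↥(Set.Iio α)) :
    (ℝ × C₀(ℕ, ℝ)) →ₗ[ℝ] BoundedContinuousFunction ↥(Set.Iic α) ℝ where
  toFun p := SB hα0 hα' hn e p
  map_add' p q := by
    ext b
    show Sfun α n e (p + q) ↑b = Sfun α n e p ↑b + Sfun α n e q ↑b
    unfold Sfun
    have hG : ∀ k ∈ Finset.range (2*n+2), Ghat α e (p + q).2 ((nxt α)^[k] ↑b)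
        = Ghat α e p.2 ((nxt α)^[k] ↑b) + Ghat α e q.2 ((nxt α)^[k] ↑b) :=
      fun k _ => Ghat_add α e p.2 q.2 _
    rw [Finset.sum_congr rfl hG, Finset.sum_add_distrib]
    show p.1 + q.1 + _ = _
    ring
  map_smul' c p := by
    ext b
    show Sfun α n e (c • p) ↑b = c • Sfun α n e p ↑b
    unfold Sfun
    have hG : ∀ k ∈ Finset.range (2*n+2), Ghat α e (c • p).2 ((nxt α)^[k] ↑b)
        = c * Ghat α e p.2 ((nxt α)^[k] ↑b) :=
      fun k _ => Ghat_smul α e c p.2 _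
    rw [Finset.sum_congr rfl hG, ← Finset.mul_sum]
    show c * p.1 + _ = _
    rw [_root_.smul_eq_mul]
    ring

theorem Tlin_bound {α : Ordinal} (hα' : α < omega0 ^ omega0) (e : ℕ ≃ ↥(Set.Iio α))
    (f : BoundedContinuousFunction ↥(Set.Iic α) ℝ) :
    ‖Tlin hα' e f‖ ≤ 2 * ‖f‖ := by
  rw [Prod.norm_def]
  apply max_le
  · show ‖fext α f α‖ ≤ 2 * ‖f‖
    rw [Real.norm_eq_abs]
    have := abs_fext_le α f α
    have h0 := norm_nonneg f
    linarith
  · show ‖TC0 hα' e f‖ ≤ 2 * ‖f‖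
    rw [← ZeroAtInftyContinuousMap.norm_toBCF_eq_norm]
    refine (BoundedContinuousFunction.norm_le (by positivity)).2 fun m => ?_
    show ‖Tg α e f m‖ ≤ 2 * ‖f‖
    rw [Real.norm_eq_abs, Tg]
    calc |fext α f _ - fext α f _| ≤ |fext α f _| + |fext α f _| := abs_sub _ _
      _ ≤ ‖f‖ + ‖f‖ := add_le_add (abs_fext_le _ _ _) (abs_fext_le _ _ _)
      _ = 2 * ‖f‖ := by ring

theorem Slin_bound {α : Ordinal} {n : ℕ} (hα0 : 0 < α)
    (hα' : α < omega0 ^ omega0) (hn : α < w (n+1)) (e : ℕ ≃ ↥(Set.Iio α))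
    (p : ℝ × C₀(ℕ, ℝ)) :
    ‖Slin hα0 hα' hn e p‖ ≤ (2*n+3) * ‖p‖ := by
  show ‖SB hα0 hα' hn e p‖ ≤ (2*n+3) * ‖p‖
  refine (BoundedContinuousFunction.norm_ofNormedAddCommGroup_le _ (by positivity) _).trans ?_
  have h1 : |p.1| ≤ ‖p‖ := by rw [← Real.norm_eq_abs]; exact norm_fst_le p
  have h2 : ‖p.2‖ ≤ ‖p‖ := norm_snd_le p
  have h3 : (0:ℝ) ≤ 2*n+2 := by positivity
  nlinarith [norm_nonneg p]

/-- The main equivalence: `C(Iic α) ≃ ℝ × c₀`. -/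
noncomputable def mainEquiv {α : Ordinal} {n : ℕ} (hα0 : 0 < α)
    (hα' : α < omega0 ^ omega0) (hn : α < w (n+1)) (e : ℕ ≃ ↥(Set.Iio α)) :
    BoundedContinuousFunction ↥(Set.Iic α) ℝ ≃L[ℝ] ℝ × C₀(ℕ, ℝ) :=
  ContinuousLinearEquiv.equivOfInverse
    ((Tlin hα' e).mkContinuous 2 (Tlin_bound hα' e))
    ((Slin hα0 hα' hn e).mkContinuous (2*n+3) (Slin_bound hα0 hα' hn e))
    (fun f => left_inverse_SB hα0 hα' hn e f)
    (fun p => right_inverse_SB hα0 hα' hn e p)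

end Stmt14

namespace Stmt14
open Filter Topology
open scoped ZeroAtInfty

noncomputable def shiftFun (p : ℝ × C₀(ℕ, ℝ)) : ℕ → ℝ :=
  fun m => Nat.casesOn m p.1 (fun k => p.2 k)

theorem shiftFun_zero_at_infty (p : ℝ × C₀(ℕ, ℝ)) :
    Tendsto (shiftFun p) (cocompact ℕ) (𝓝 0) := by
  rw [cocompact_eq_cofinite, Metric.tendsto_nhds]
  intro ε hε
  rw [Filter.eventually_cofinite]
  have hfin : {k : ℕ | ¬ dist (p.2 k) 0 < ε}.Finite := by
    have h := p.2.zero_at_infty'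
    rw [cocompact_eq_cofinite] at h
    have h2 := Metric.tendsto_nhds.1 h ε hε
    rwa [Filter.eventually_cofinite] at h2
  refine Set.Finite.subset (Set.Finite.insert 0 (hfin.image (· + 1))) ?_
  intro m hm
  cases m with
  | zero => exact Set.mem_insert _ _
  | succ k =>
    refine Set.mem_insert_of_mem _ ⟨k, hm, rfl⟩

noncomputable def shiftC0 (p : ℝ × C₀(ℕ, ℝ)) : C₀(ℕ, ℝ) :=
  ⟨⟨shiftFun p, continuous_of_discreteTopology⟩, shiftFun_zero_at_infty p⟩

theorem tail_zero_at_infty (h : C₀(ℕ, ℝ)) :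
    Tendsto (fun k : ℕ => h (k+1)) (cocompact ℕ) (𝓝 0) := by
  rw [cocompact_eq_cofinite]
  have h1 := h.zero_at_infty'
  rw [cocompact_eq_cofinite] at h1
  have h2 : Tendsto (fun k : ℕ => k + 1) cofinite cofinite :=
    Function.Injective.tendsto_cofinite (fun a b hab => by omega)
  exact h1.comp h2

noncomputable def unshift (h : C₀(ℕ, ℝ)) : ℝ × C₀(ℕ, ℝ) :=
  (h 0, ⟨⟨fun k => h (k+1), continuous_of_discreteTopology⟩, tail_zero_at_infty h⟩)

noncomputable def shiftLin : (ℝ × C₀(ℕ, ℝ)) →ₗ[ℝ] C₀(ℕ, ℝ) where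
  toFun := shiftC0
  map_add' p q := by
    ext m
    show shiftFun (p + q) m = shiftFun p m + shiftFun q m
    cases m with
    | zero => rfl
    | succ k => show (p.2 + q.2) k = p.2 k + q.2 k; simp
  map_smul' c p := by
    ext m
    show shiftFun (c • p) m = c • shiftFun p m
    cases m with
    | zero => rfl
    | succ k => show (c • p.2) k = c • p.2 k; simp

noncomputable def unshiftLin : C₀(ℕ, ℝ) →ₗ[ℝ] (ℝ × C₀(ℕ, ℝ)) where
  toFun := unshift
  map_add' h g := by
    refine Prod.ext ?_ ?_
    · show (h + g) 0 = h 0 + g 0; simp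
    · ext k
      show (h + g) (k+1) = h (k+1) + g (k+1); simp
  map_smul' c h := by
    refine Prod.ext ?_ ?_
    · show (c • h) 0 = c • h 0; simp
    · ext k
      show (c • h) (k+1) = c • h (k+1); simp

theorem abs_c0_apply_le (g : C₀(ℕ, ℝ)) (m : ℕ) : |g m| ≤ ‖g‖ := by
  have : ‖g m‖ ≤ ‖g‖ := by
    rw [← ZeroAtInftyContinuousMap.norm_toBCF_eq_norm]
    exact BoundedContinuousFunction.norm_coe_le_norm g.toBCF m
  rwa [Real.norm_eq_abs] at this

theorem shiftLin_bound (p : ℝ × C₀(ℕ, ℝ)) : ‖shiftLin p‖ ≤ 1 * ‖p‖ := by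
  rw [one_mul]
  show ‖shiftC0 p‖ ≤ ‖p‖
  rw [← ZeroAtInftyContinuousMap.norm_toBCF_eq_norm]
  refine (BoundedContinuousFunction.norm_le (norm_nonneg p)).2 fun m => ?_
  show ‖shiftFun p m‖ ≤ ‖p‖
  cases m with
  | zero =>
    show ‖p.1‖ ≤ ‖p‖
    exact norm_fst_le p
  | succ k =>
    show ‖p.2 k‖ ≤ ‖p‖
    refine le_trans ?_ (norm_snd_le p)
    rw [Real.norm_eq_abs]
    exact abs_c0_apply_le p.2 k

theorem unshiftLin_bound (h : C₀(ℕ, ℝ)) : ‖unshiftLin h‖ ≤ 1 * ‖h‖ := by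
  rw [one_mul]
  show ‖unshift h‖ ≤ ‖h‖
  rw [Prod.norm_def]
  apply max_le
  · show ‖h 0‖ ≤ ‖h‖
    rw [Real.norm_eq_abs]
    exact abs_c0_apply_le h 0
  · rw [← ZeroAtInftyContinuousMap.norm_toBCF_eq_norm]
    refine (BoundedContinuousFunction.norm_le (norm_nonneg h)).2 fun k => ?_
    show ‖h (k+1)‖ ≤ ‖h‖
    rw [Real.norm_eq_abs]
    exact abs_c0_apply_le h (k+1)

noncomputable def shiftEquiv : (ℝ × C₀(ℕ, ℝ)) ≃L[ℝ] C₀(ℕ, ℝ) :=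
  ContinuousLinearEquiv.equivOfInverse
    (shiftLin.mkContinuous 1 shiftLin_bound)
    (unshiftLin.mkContinuous 1 unshiftLin_bound)
    (fun p => by
      refine Prod.ext ?_ ?_
      · rfl
      · ext k; rfl)
    (fun h => by
      ext m
      cases m with
      | zero => rfl
      | succ k => rfl)

theorem card_w_le (k : ℕ) : (w k).card ≤ Cardinal.aleph0 := by
  induction k with
  | zero =>
    have : w 0 = 1 := by simp [w]
    rw [this]
    simp
  | succ k ih =>
    rw [w_succ, Ordinal.card_mul, Ordinal.card_omega0]
    calc (w k).card * Cardinal.aleph0 ≤ Cardinal.aleph0 * Cardinal.aleph0 :=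
        mul_le_mul' ih le_rfl
      _ = Cardinal.aleph0 := Cardinal.aleph0_mul_aleph0

end Stmt14


/-- For every infinite ordinal `α < ω^ω`, the space `C(α)` of continuous real
functions on `[0, α]` (with the order topology; equivalently, bounded continuous
functions on the compact space `Iic α`) is linearly homeomorphic to `c₀`. -/
theorem stmt14 (α : Ordinal) (hα : Ordinal.omega0 ≤ α)
    (hα' : α < Ordinal.omega0 ^ Ordinal.omega0) :
    Nonempty ((BoundedContinuousFunction (Set.Iic α) ℝ) ≃L[ℝ] C₀(ℕ, ℝ)) := by
  have hα0 : 0 < α := lt_of_lt_of_le Ordinal.omega0_pos hα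
  -- find `n` with `α < ω^(n+1)`
  obtain ⟨n, hn⟩ : ∃ n : ℕ, α < Stmt14.w (n+1) := by
    have hlt : Ordinal.log Ordinal.omega0 α < Ordinal.omega0 :=
      (Ordinal.lt_opow_iff_log_lt Ordinal.one_lt_omega0 hα0.ne').1 hα'
    obtain ⟨n, hn⟩ := Ordinal.lt_omega0.1 hlt
    refine ⟨n, ?_⟩
    calc α < Ordinal.omega0 ^ (Order.succ (Ordinal.log Ordinal.omega0 α)) :=
        Ordinal.lt_opow_succ_log_self Ordinal.one_lt_omega0 α
    _ ≤ Stmt14.w (n+1) := by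
        apply Ordinal.opow_le_opow_right Ordinal.omega0_pos
        rw [Order.succ_eq_add_one, hn]
        exact_mod_cast le_rfl
  -- a bijection `ℕ ≃ Iio α`
  have hcnt : Countable ↥(Set.Iio α) := by
    rw [← Cardinal.mk_le_aleph0_iff, Ordinal.mk_Iio_ordinal]
    have hcard : α.card ≤ Cardinal.aleph0 :=
      le_trans (Ordinal.card_le_card hn.le) (Stmt14.card_w_le (n+1))
    calc Cardinal.lift.{u_1+1} α.card ≤ Cardinal.lift.{u_1+1} Cardinal.aleph0 :=
        Cardinal.lift_le.2 hcard
    _ = Cardinal.aleph0 := by simp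
  have hinf : Infinite ↥(Set.Iio α) := by
    refine Infinite.of_injective
      (fun k : ℕ => (⟨(k : Ordinal), lt_of_lt_of_le (Ordinal.nat_lt_omega0 k) hα⟩ :
        ↥(Set.Iio α))) ?_
    intro a b hab
    have : (a : Ordinal) = (b : Ordinal) := congrArg Subtype.val hab
    exact_mod_cast this
  obtain ⟨d⟩ : Nonempty (Denumerable ↥(Set.Iio α)) :=
    nonempty_denumerable_iff.2 ⟨hcnt, hinf⟩
  let e : ℕ ≃ ↥(Set.Iio α) := (Denumerable.eqv ↥(Set.Iio α)).symm
  exact ⟨(Stmt14.mainEquiv hα0 hα' hn e).trans Stmt14.shiftEquiv⟩
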